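/- Let (X,d) be a metric space, let a < b be real numbers, and let c : [a,b] → X be a continuous curve of finite length. Then there exists an increasing homeomorphism ψ : [a,b] → [a,b] (with ψ(a) = a and ψ(b) = b) such that both ψ and the composition c ∘ ψ are Lipschitz continuous. -/

import Mathlib

open Set
open scoped ENNReal

lemma small_var_right {X : Type*} [PseudoEMetricSpace X] {a b : ℝ}
    {c : ℝ → X} (hc : ContinuousOn c (Set.Icc a b))
    (hfin : eVariationOn c (Set.Icc a b) ≠ ⊤) {t : ℝ} (ht : t ∈ Set.Ico a b)
    {ε : ℝ≥0∞} (hε : 0 < ε) (hεtop : ε ≠ ⊤) :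
    ∃ t' ∈ Set.Ioc t b, eVariationOn c (Set.Icc t t') ≤ ε := by
  have hsub : Set.Icc t b ⊆ Set.Icc a b := Icc_subset_Icc ht.1 le_rfl
  have hVfin : eVariationOn c (Set.Icc t b) ≠ ⊤ :=
    fun h => hfin (eq_top_mono (eVariationOn.mono c hsub) h)
  set V := eVariationOn c (Set.Icc t b) with hVdef
  rcases eq_or_ne V 0 with hV0 | hV0
  · exact ⟨b, ⟨ht.2, le_rfl⟩, by rw [← hVdef, hV0]; exact zero_le⟩
  have hhalf : (ε / 2 : ℝ≥0∞) ≠ 0 := by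
    simp [ENNReal.div_eq_zero_iff, hε.ne']
  have h2 : V - ε / 2 < V := ENNReal.sub_lt_self hVfin hV0 hhalf
  have h2' : V - ε / 2 < ⨆ p : ℕ × { u : ℕ → ℝ // Monotone u ∧ ∀ i, u i ∈ Set.Icc t b },
      ∑ i ∈ Finset.range p.1, edist (c (p.2.1 (i + 1))) (c (p.2.1 i)) := h2
  obtain ⟨⟨n, ⟨u, hu, hus⟩⟩, hp⟩ := lt_iSup_iff.mp h2'
  simp only at hp
  set ε' := ε / (8 * (n + 1) : ℝ≥0∞) with hε'def
  have hd0 : (8 * (n + 1) : ℝ≥0∞) ≠ 0 := by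
    simp
  have hdtop : (8 * (n + 1) : ℝ≥0∞) ≠ ⊤ := by
    refine ENNReal.mul_ne_top (by norm_num) ?_
    exact ENNReal.add_ne_top.mpr ⟨ENNReal.natCast_ne_top n, ENNReal.one_ne_top⟩
  have hε'0 : 0 < ε' := ENNReal.div_pos hε.ne' hdtop
  have hε'top : ε' ≠ ⊤ := by
    simp [hε'def, ENNReal.div_eq_top, hεtop, hd0]
  -- continuity at t
  have hct : ContinuousWithinAt c (Set.Icc a b) t := hc t ⟨ht.1, ht.2.le⟩
  have hball : c ⁻¹' EMetric.ball (c t) ε' ∈ nhdsWithin t (Set.Icc a b) :=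
    hct (EMetric.ball_mem_nhds (c t) hε'0)
  obtain ⟨δ, hδ, hδball⟩ := Metric.mem_nhdsWithin_iff.mp hball
  set t' := min (t + δ / 2) b with ht'def
  have htt' : t < t' := lt_min (by linarith) ht.2
  have ht'b : t' ≤ b := min_le_right _ _
  have hedist : ∀ x ∈ Set.Icc t t', edist (c x) (c t) < ε' := by
    intro x hx
    have hxmem : x ∈ Set.Icc a b := ⟨ht.1.trans hx.1, hx.2.trans ht'b⟩
    have hxd : dist x t < δ := by
      rw [Real.dist_eq, abs_of_nonneg (by linarith [hx.1])]
      have : x ≤ t + δ / 2 := hx.2.trans (min_le_left _ _)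
      linarith
    exact hδball ⟨Metric.mem_ball.mpr hxd, hxmem⟩
  set w := fun i => max (u i) t' with hwdef
  have hw : Monotone w := fun i j hij => max_le_max (hu hij) le_rfl
  have hws : ∀ i, w i ∈ Set.Icc t' b := fun i =>
    ⟨le_max_right _ _, max_le (hus i).2 ht'b⟩
  have hS' : ∑ i ∈ Finset.range n, edist (c (w (i + 1))) (c (w i)) ≤
      eVariationOn c (Set.Icc t' b) := eVariationOn.sum_le (f := c) (n := n) hw hws
  have hclose : ∀ i, edist (c (u i)) (c (w i)) ≤ 2 * ε' := by
    intro i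
    rcases le_or_gt t' (u i) with h | h
    · simp [hwdef, max_eq_left h]
    · have h1 : edist (c (u i)) (c t) < ε' := hedist (u i) ⟨(hus i).1, h.le⟩
      have h2 : edist (c t') (c t) < ε' := hedist t' ⟨htt'.le, le_rfl⟩
      calc edist (c (u i)) (c (w i)) = edist (c (u i)) (c t') := by
            rw [hwdef]; simp [max_eq_right h.le]
        _ ≤ edist (c (u i)) (c t) + edist (c t) (c t') := edist_triangle _ _ _
        _ ≤ ε' + ε' := add_le_add h1.le (by rw [edist_comm]; exact h2.le)
        _ = 2 * ε' := (two_mul _).symm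
  have hterm : ∀ i, edist (c (u (i + 1))) (c (u i)) ≤
      edist (c (w (i + 1))) (c (w i)) + 4 * ε' := by
    intro i
    calc edist (c (u (i + 1))) (c (u i)) ≤
        edist (c (u (i + 1))) (c (w (i + 1))) + edist (c (w (i + 1))) (c (w i)) +
          edist (c (w i)) (c (u i)) := edist_triangle4 _ _ _ _
      _ ≤ 2 * ε' + edist (c (w (i + 1))) (c (w i)) + 2 * ε' := by
          gcongr
          · exact hclose _
          · rw [edist_comm]; exact hclose _
      _ = edist (c (w (i + 1))) (c (w i)) + 4 * ε' := by ring
  have hsum : ∑ i ∈ Finset.range n, edist (c (u (i + 1))) (c (u i)) ≤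
      (∑ i ∈ Finset.range n, edist (c (w (i + 1))) (c (w i))) + n * (4 * ε') := by
    calc ∑ i ∈ Finset.range n, edist (c (u (i + 1))) (c (u i)) ≤
        ∑ i ∈ Finset.range n, (edist (c (w (i + 1))) (c (w i)) + 4 * ε') :=
          Finset.sum_le_sum fun i _ => hterm i
      _ = _ := by rw [Finset.sum_add_distrib, Finset.sum_const, Finset.card_range,
            nsmul_eq_mul]
  have hn4 : (n : ℝ≥0∞) * (4 * ε') ≤ ε / 2 := by
    rw [ENNReal.le_div_iff_mul_le (Or.inl two_ne_zero) (Or.inl ENNReal.ofNat_ne_top)]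
    have h8 : (8 * (n + 1) : ℝ≥0∞) * ε' ≤ ε := ENNReal.mul_div_le
    calc (n : ℝ≥0∞) * (4 * ε') * 2 = (8 * (n : ℝ≥0∞)) * ε' := by ring
      _ ≤ (8 * ((n : ℝ≥0∞) + 1)) * ε' := by gcongr; exact le_self_add
      _ ≤ ε := h8
  have hBfin : eVariationOn c (Set.Icc t' b) ≠ ⊤ := by
    refine fun h => hVfin (eq_top_mono (eVariationOn.mono c ?_) h)
    exact Icc_subset_Icc htt'.le le_rfl
  have hVle : V ≤ eVariationOn c (Set.Icc t' b) + ε := by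
    calc V ≤ V - ε / 2 + ε / 2 := le_tsub_add
      _ ≤ (∑ i ∈ Finset.range n, edist (c (u (i + 1))) (c (u i))) + ε / 2 := by
          exact add_le_add_left hp.le _
      _ ≤ ((∑ i ∈ Finset.range n, edist (c (w (i + 1))) (c (w i))) + n * (4 * ε')) + ε / 2 :=
          add_le_add_left hsum _
      _ ≤ (eVariationOn c (Set.Icc t' b) + ε / 2) + ε / 2 := by
          gcongr
      _ = eVariationOn c (Set.Icc t' b) + ε := by
          rw [add_assoc, ENNReal.add_halves]
  have hsplit : eVariationOn c (Set.Icc t t') + eVariationOn c (Set.Icc t' b) = V := by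
    have h := eVariationOn.Icc_add_Icc c (s := Set.Icc t b) htt'.le ht'b ⟨htt'.le, ht'b⟩
    rwa [inter_eq_self_of_subset_right (Icc_subset_Icc le_rfl ht'b),
      inter_eq_self_of_subset_right (Icc_subset_Icc htt'.le le_rfl), inter_self] at h
  refine ⟨t', ⟨htt', ht'b⟩, ?_⟩
  have : eVariationOn c (Set.Icc t t') + eVariationOn c (Set.Icc t' b) ≤
      ε + eVariationOn c (Set.Icc t' b) := by
    rw [hsplit]
    calc V ≤ eVariationOn c (Set.Icc t' b) + ε := hVle
      _ = ε + eVariationOn c (Set.Icc t' b) := add_comm _ _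
  exact (ENNReal.add_le_add_iff_right hBfin).mp this

lemma evar_comp_neg {X : Type*} [PseudoEMetricSpace X] (c : ℝ → X) (u v : ℝ) :
    eVariationOn (c ∘ Neg.neg) (Set.Icc u v) = eVariationOn c (Set.Icc (-v) (-u)) := by
  rw [eVariationOn.comp_eq_of_antitoneOn c Neg.neg
    (fun x _ y _ h => neg_le_neg h), Set.image_neg_Icc]

lemma small_var_left {X : Type*} [PseudoEMetricSpace X] {a b : ℝ}
    {c : ℝ → X} (hc : ContinuousOn c (Set.Icc a b))
    (hfin : eVariationOn c (Set.Icc a b) ≠ ⊤) {t : ℝ} (ht : t ∈ Set.Ioc a b)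
    {ε : ℝ≥0∞} (hε : 0 < ε) (hεtop : ε ≠ ⊤) :
    ∃ t' ∈ Set.Ico a t, eVariationOn c (Set.Icc t' t) ≤ ε := by
  have hmaps : Set.MapsTo Neg.neg (Set.Icc (-b) (-a)) (Set.Icc a b) := by
    intro x hx
    exact ⟨by linarith [hx.2], by linarith [hx.1]⟩
  have hcont : ContinuousOn (c ∘ Neg.neg) (Set.Icc (-b) (-a)) :=
    hc.comp continuous_neg.continuousOn hmaps
  have hfin' : eVariationOn (c ∘ Neg.neg) (Set.Icc (-b) (-a)) ≠ ⊤ := by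
    rw [evar_comp_neg, neg_neg, neg_neg]; exact hfin
  obtain ⟨t'', ht'', hvar⟩ := small_var_right hcont hfin'
    (t := -t) ⟨neg_le_neg ht.2, neg_lt_neg ht.1⟩ hε hεtop
  refine ⟨-t'', ⟨by linarith [ht''.2], by linarith [ht''.1]⟩, ?_⟩
  rw [evar_comp_neg, neg_neg] at hvar
  exact hvar

lemma var_continuousOn {X : Type*} [MetricSpace X] {a b : ℝ} (hab : a ≤ b)
    {c : ℝ → X} (hc : ContinuousOn c (Set.Icc a b))
    (hfin : eVariationOn c (Set.Icc a b) ≠ ⊤) :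
    ContinuousOn (variationOnFromTo c (Set.Icc a b) a) (Set.Icc a b) := by
  have hloc : LocallyBoundedVariationOn c (Set.Icc a b) :=
    BoundedVariationOn.locallyBoundedVariationOn hfin
  have hamem : a ∈ Set.Icc a b := ⟨le_rfl, hab⟩
  have hvmono : MonotoneOn (variationOnFromTo c (Set.Icc a b) a) (Set.Icc a b) :=
    variationOnFromTo.monotoneOn hloc hamem
  intro x hx
  rw [Metric.continuousWithinAt_iff]
  intro ε hε
  have hofReal : (0 : ℝ≥0∞) < ENNReal.ofReal (ε / 2) := by
    rw [ENNReal.ofReal_pos]; linarith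
  obtain ⟨δ₁, hδ₁, hδ₁'⟩ : ∃ δ₁ > 0, ∀ y ∈ Set.Icc a b, x ≤ y → y - x < δ₁ →
      eVariationOn c (Set.Icc x y) ≤ ENNReal.ofReal (ε / 2) := by
    rcases eq_or_lt_of_le hx.2 with hxb | hxb
    · refine ⟨1, one_pos, fun y hy hxy _ => ?_⟩
      have : y = x := le_antisymm (hxb ▸ hy.2) hxy
      subst this
      rw [Set.Icc_self]
      rw [eVariationOn.subsingleton c (Set.subsingleton_singleton)]
      exact zero_le
    · obtain ⟨t', ⟨hxt', ht'b⟩, hvar⟩ := small_var_right hc hfin ⟨hx.1, hxb⟩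
        hofReal ENNReal.ofReal_ne_top
      exact ⟨t' - x, sub_pos.mpr hxt', fun y hy hxy hlt =>
        (eVariationOn.mono c (Icc_subset_Icc le_rfl (by linarith))).trans hvar⟩
  obtain ⟨δ₂, hδ₂, hδ₂'⟩ : ∃ δ₂ > 0, ∀ y ∈ Set.Icc a b, y ≤ x → x - y < δ₂ →
      eVariationOn c (Set.Icc y x) ≤ ENNReal.ofReal (ε / 2) := by
    rcases eq_or_lt_of_le hx.1 with hax | hax
    · refine ⟨1, one_pos, fun y hy hyx _ => ?_⟩
      have : y = x := le_antisymm hyx (hax ▸ hy.1)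
      subst this
      rw [Set.Icc_self]
      rw [eVariationOn.subsingleton c (Set.subsingleton_singleton)]
      exact zero_le
    · obtain ⟨t', ⟨hat', ht'x⟩, hvar⟩ := small_var_left hc hfin ⟨hax, hx.2⟩
        hofReal ENNReal.ofReal_ne_top
      exact ⟨x - t', sub_pos.mpr ht'x, fun y hy hyx hlt =>
        (eVariationOn.mono c (Icc_subset_Icc (by linarith) le_rfl)).trans hvar⟩
  refine ⟨min δ₁ δ₂, lt_min hδ₁ hδ₂, fun y hy hdist => ?_⟩
  rw [Real.dist_eq] at hdist
  have hvar_between : ∀ p ∈ Set.Icc a b, ∀ q ∈ Set.Icc a b, p ≤ q →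
      variationOnFromTo c (Set.Icc a b) a q - variationOnFromTo c (Set.Icc a b) a p =
        (eVariationOn c (Set.Icc p q)).toReal := by
    intro p hp q hq hpq
    have hadd := variationOnFromTo.add hloc hamem hp hq
    have heq : variationOnFromTo c (Set.Icc a b) a q -
        variationOnFromTo c (Set.Icc a b) a p =
        variationOnFromTo c (Set.Icc a b) p q := by linarith
    rw [heq, variationOnFromTo.eq_of_le c _ hpq,
      inter_eq_self_of_subset_right (Icc_subset_Icc hp.1 hq.2)]
  rcases le_total x y with hxy | hyx
  · rw [Real.dist_eq, abs_of_nonneg (sub_nonneg.mpr (hvmono hx hy hxy))]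
    have h1 : y - x < δ₁ := by
      have := abs_lt.mp (lt_of_lt_of_le hdist (min_le_left _ _))
      linarith [this.1, this.2]
    have h2 := hδ₁' y hy hxy h1
    rw [hvar_between x hx y hy hxy]
    calc (eVariationOn c (Set.Icc x y)).toReal ≤ ε / 2 :=
        ENNReal.toReal_le_of_le_ofReal (by linarith) h2
      _ < ε := by linarith
  · rw [Real.dist_eq, abs_of_nonpos (sub_nonpos.mpr (hvmono hy hx hyx)), neg_sub]
    have h1 : x - y < δ₂ := by
      have := abs_lt.mp (lt_of_lt_of_le hdist (min_le_right _ _))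
      linarith [this.1, this.2]
    have h2 := hδ₂' y hy hyx h1
    rw [hvar_between y hy x hx hyx]
    calc (eVariationOn c (Set.Icc y x)).toReal ≤ ε / 2 :=
        ENNReal.toReal_le_of_le_ofReal (by linarith) h2
      _ < ε := by linarith

/-- **Reparametrization of rectifiable curves.** Let `(X,d)` be a metric space, `a < b`
real numbers, and `c : [a,b] → X` a continuous curve of finite length (the length being
the total variation of `c` on `[a,b]`). Then there exists an increasing homeomorphism
`ψ : [a,b] → [a,b]` fixing the endpoints such that both `ψ` and `c ∘ ψ` are Lipschitz. -/
theorem reparametrization_of_rectifiable_curve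
    {X : Type*} [MetricSpace X] (a b : ℝ) (hab : a < b)
    (c : ℝ → X) (hc : ContinuousOn c (Set.Icc a b))
    (hfin : eVariationOn c (Set.Icc a b) ≠ ⊤) :
    ∃ ψ : ℝ → ℝ,
      Set.MapsTo ψ (Set.Icc a b) (Set.Icc a b) ∧
      StrictMonoOn ψ (Set.Icc a b) ∧
      Set.SurjOn ψ (Set.Icc a b) (Set.Icc a b) ∧
      ψ a = a ∧ ψ b = b ∧
      (∃ K₁ : NNReal, LipschitzOnWith K₁ ψ (Set.Icc a b)) ∧
      (∃ K₂ : NNReal, LipschitzOnWith K₂ (c ∘ ψ) (Set.Icc a b)) := by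
  have hab' : a ≤ b := hab.le
  have hloc : LocallyBoundedVariationOn c (Set.Icc a b) :=
    BoundedVariationOn.locallyBoundedVariationOn hfin
  have hamem : a ∈ Set.Icc a b := ⟨le_rfl, hab'⟩
  have hbmem : b ∈ Set.Icc a b := ⟨hab', le_rfl⟩
  set v := variationOnFromTo c (Set.Icc a b) a with hvdef
  have hva : v a = 0 := variationOnFromTo.self c _ a
  set L := v b with hLdef
  have hL0 : 0 ≤ L := variationOnFromTo.nonneg_of_le c _ hab'
  have hvmono : MonotoneOn v (Set.Icc a b) := variationOnFromTo.monotoneOn hloc hamem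
  set s := fun t : ℝ => t + v t with hsdef
  have hsa : s a = a := by simp [hsdef, hva]
  have hsb : s b = b + L := rfl
  -- distance bound by increments of v
  have hdistv : ∀ x ∈ Set.Icc a b, ∀ y ∈ Set.Icc a b, x ≤ y →
      dist (c x) (c y) ≤ v y - v x := by
    intro x hx y hy hxy
    have hadd := variationOnFromTo.add hloc hamem hx hy
    have heq : v y - v x = variationOnFromTo c (Set.Icc a b) x y := by
      rw [hvdef] at *; linarith
    rw [heq, variationOnFromTo.eq_of_le c _ hxy, dist_edist]
    refine ENNReal.toReal_mono (hloc x y hx hy) ?_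
    exact eVariationOn.edist_le c ⟨hx, le_rfl, hxy⟩ ⟨hy, hxy, le_rfl⟩
  -- expansion property of s
  have hkey : ∀ x ∈ Set.Icc a b, ∀ y ∈ Set.Icc a b, x ≤ y → y - x ≤ s y - s x := by
    intro x hx y hy hxy
    have := hvmono hx hy hxy
    simp only [hsdef]
    linarith
  have hsmono : MonotoneOn s (Set.Icc a b) := by
    intro x hx y hy hxy
    have := hkey x hx y hy hxy
    linarith
  have hsinj : Set.InjOn s (Set.Icc a b) := by
    intro x hx y hy hxy
    rcases le_total x y with h | h
    · have := hkey x hx y hy h; linarith [hxy ▸ this]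
    · have := hkey y hy x hx h
      rw [hxy] at this
      linarith
  have hscont : ContinuousOn s (Set.Icc a b) :=
    continuousOn_id.add (var_continuousOn hab' hc hfin)
  have hsurj : Set.SurjOn s (Set.Icc a b) (Set.Icc a (b + L)) := by
    have h := intermediate_value_Icc hab' hscont
    rw [hsa] at h
    exact h
  set g := Function.invFunOn s (Set.Icc a b) with hgdef
  have hgmem : ∀ u ∈ Set.Icc a (b + L), g u ∈ Set.Icc a b :=
    fun u hu => hsurj.mapsTo_invFunOn hu
  have hgr : ∀ u ∈ Set.Icc a (b + L), s (g u) = u :=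
    fun u hu => hsurj.rightInvOn_invFunOn hu
  have hsmem : ∀ y ∈ Set.Icc a b, s y ∈ Set.Icc a (b + L) := by
    intro y hy
    constructor
    · have := hsmono hamem hy hy.1
      rw [hsa] at this; exact this
    · exact hsmono hy hbmem hy.2
  have hgs : ∀ y ∈ Set.Icc a b, g (s y) = y := by
    intro y hy
    exact hsinj (hgmem _ (hsmem y hy)) hy (hgr _ (hsmem y hy))
  set r := (b + L - a) / (b - a) with hrdef
  have hba : (0:ℝ) < b - a := sub_pos.mpr hab
  have hr0 : 0 < r := div_pos (by linarith) hba
  set α := fun u : ℝ => a + (u - a) * r with hαdef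
  have hαdiff : ∀ u w : ℝ, α w - α u = (w - u) * r := by intro u w; simp [hαdef]; ring
  have hαb : α b = b + L := by
    simp only [hαdef]
    rw [hrdef, mul_div_assoc', mul_comm, mul_div_assoc, div_self hba.ne', mul_one]
    ring
  have hαa : α a = a := by simp [hαdef]
  have hαmaps : ∀ u ∈ Set.Icc a b, α u ∈ Set.Icc a (b + L) := by
    intro u hu
    constructor
    · simp only [hαdef]
      nlinarith [hu.1, hr0.le]
    · have : α u ≤ α b := by
        have := hαdiff u b
        nlinarith [hu.2, hr0.le]
      rw [hαb] at this; exact this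
  set ψ := fun u : ℝ => g (α u) with hψdef
  have hψmem : ∀ u ∈ Set.Icc a b, ψ u ∈ Set.Icc a b :=
    fun u hu => hgmem _ (hαmaps u hu)
  have hsψ : ∀ u ∈ Set.Icc a b, s (ψ u) = α u :=
    fun u hu => hgr _ (hαmaps u hu)
  have hψmono : ∀ u ∈ Set.Icc a b, ∀ w ∈ Set.Icc a b, u ≤ w → ψ u ≤ ψ w := by
    intro u hu w hw huw
    by_contra h
    push_neg at h
    have h1 := hkey (ψ w) (hψmem w hw) (ψ u) (hψmem u hu) h.le
    rw [hsψ u hu, hsψ w hw] at h1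
    have h2 := hαdiff w u
    nlinarith [mul_nonneg (sub_nonneg.mpr huw) hr0.le]
  have hψlip : ∀ u ∈ Set.Icc a b, ∀ w ∈ Set.Icc a b, u ≤ w →
      ψ w - ψ u ≤ r * (w - u) := by
    intro u hu w hw huw
    have h1 := hkey (ψ u) (hψmem u hu) (ψ w) (hψmem w hw) (hψmono u hu w hw huw)
    rw [hsψ u hu, hsψ w hw] at h1
    have := hαdiff u w
    nlinarith
  have hcψlip : ∀ u ∈ Set.Icc a b, ∀ w ∈ Set.Icc a b, u ≤ w →
      dist (c (ψ u)) (c (ψ w)) ≤ r * (w - u) := by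
    intro u hu w hw huw
    have hm := hψmono u hu w hw huw
    have h0 := hdistv (ψ u) (hψmem u hu) (ψ w) (hψmem w hw) hm
    have h1 := hkey (ψ u) (hψmem u hu) (ψ w) (hψmem w hw) hm
    rw [hsψ u hu, hsψ w hw] at h1
    have h2 := hαdiff u w
    have h3 : v (ψ w) - v (ψ u) ≤ s (ψ w) - s (ψ u) := by
      simp only [hsdef]; nlinarith
    rw [hsψ u hu, hsψ w hw] at h3
    nlinarith
  refine ⟨ψ, hψmem, ?_, ?_, ?_, ?_, ?_, ?_⟩
  · -- strict mono
    intro u hu w hw huw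
    rcases lt_or_eq_of_le (hψmono u hu w hw huw.le) with h | h
    · exact h
    · exfalso
      have h1 : s (ψ u) = s (ψ w) := by rw [h]
      rw [hsψ u hu, hsψ w hw] at h1
      have := hαdiff u w
      nlinarith
  · -- surjectivity
    intro y hy
    have hsy := hsmem y hy
    set u₀ := a + (s y - a) / r with hu₀def
    have hu₀mem : u₀ ∈ Set.Icc a b := by
      constructor
      · have : 0 ≤ (s y - a) / r := div_nonneg (by linarith [hsy.1]) hr0.le
        simp only [hu₀def]; linarith
      · simp only [hu₀def]
        rw [← le_sub_iff_add_le']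
        rw [div_le_iff₀ hr0]
        have : (b - a) * r = b + L - a := by
          rw [hrdef, mul_div_assoc', mul_comm, mul_div_assoc, div_self hba.ne', mul_one]
        nlinarith [hsy.2]
    refine ⟨u₀, hu₀mem, ?_⟩
    have hαu₀ : α u₀ = s y := by
      simp only [hαdef, hu₀def]
      rw [add_sub_cancel_left, div_mul_cancel₀ _ hr0.ne']
      ring
    show g (α u₀) = y
    rw [hαu₀]
    exact hgs y hy
  · -- ψ a = a
    have h := hgs a hamem
    rw [hsa] at h
    show g (α a) = a
    rw [hαa]
    exact h
  · -- ψ b = b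
    show g (α b) = b
    rw [hαb, ← hsb]
    exact hgs b hbmem
  · -- Lipschitz ψ
    refine ⟨⟨r, hr0.le⟩, LipschitzOnWith.of_dist_le_mul ?_⟩
    intro u hu w hw
    show dist (ψ u) (ψ w) ≤ r * dist u w
    rcases le_total u w with h | h
    · rw [Real.dist_eq, abs_of_nonpos (sub_nonpos.mpr (hψmono u hu w hw h)),
        Real.dist_eq, abs_of_nonpos (sub_nonpos.mpr h)]
      have := hψlip u hu w hw h
      linarith
    · rw [Real.dist_eq, abs_of_nonneg (sub_nonneg.mpr (hψmono w hw u hu h)),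
        Real.dist_eq, abs_of_nonneg (sub_nonneg.mpr h)]
      have := hψlip w hw u hu h
      linarith
  · -- Lipschitz c ∘ ψ
    refine ⟨⟨r, hr0.le⟩, LipschitzOnWith.of_dist_le_mul ?_⟩
    intro u hu w hw
    show dist ((c ∘ ψ) u) ((c ∘ ψ) w) ≤ r * dist u w
    rcases le_total u w with h | h
    · have h1 := hcψlip u hu w hw h
      rw [Real.dist_eq, abs_of_nonpos (sub_nonpos.mpr h)]
      simp only [Function.comp_apply]
      linarith
    · have h1 := hcψlip w hw u hu h
      rw [Real.dist_eq, abs_of_nonneg (sub_nonneg.mpr h)]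
      simp only [Function.comp_apply]
      rw [dist_comm]
      linarith
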